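/- Let T be a tree on n vertices with domination number τ(T) ≥ 3 + ℓ(T), where ℓ(T) is the maximum number of leaves adjacent to a single vertex. Then there is a 3-edge-coloring of K_n in which every copy of T uses all three colors (T is non-ξ-primitive). Concretely, for any integer a with ℓ(T) < a and a + 1 < τ(T) and a ≤ n − 3: fix a set V_a of a vertices and a vertex v outside V_a; color all edges incident to v red, all other edges incident to V_a blue, and all remaining edges green; then every copy of T contains edges of all three colors. -/

import Mathlib

/-- `S` is a dominating set of `G`: every vertex is in `S` or adjacent to a vertex of `S`. -/
def IsDomSet {V : Type*} (G : SimpleGraph V) (S : Finset V) : Prop :=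
  ∀ v, v ∈ S ∨ ∃ u ∈ S, G.Adj u v

/-- The domination number of `G`. -/
noncomputable def domNum {V : Type*} [Fintype V] (G : SimpleGraph V) : ℕ :=
  sInf {k | ∃ S : Finset V, S.card = k ∧ IsDomSet G S}

/-- `v` is a leaf of `G`: it has exactly one neighbor. -/
def IsLeaf {V : Type*} (G : SimpleGraph V) (v : V) : Prop :=
  ∃! u, G.Adj v u

/-- ℓ(G): the largest number of leaves adjacent to a single vertex. -/
noncomputable def maxLeaves {V : Type*} [Fintype V] (G : SimpleGraph V) : ℕ :=
  sSup {k | ∃ (v : V) (L : Finset V), L.card = k ∧ ∀ u ∈ L, G.Adj v u ∧ IsLeaf G u}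

private lemma exists_adj_of_connected {n : ℕ} {T : SimpleGraph (Fin n)}
    (hc : T.Connected) (hn : 2 ≤ n) (x : Fin n) : ∃ y, T.Adj x y := by
  have hne : ∃ y : Fin n, y ≠ x := by
    refine Fintype.exists_ne_of_one_lt_card ?_ x
    simpa using (show 1 < n by omega)
  obtain ⟨y, hy⟩ := hne
  obtain ⟨p⟩ := hc.preconnected x y
  cases p with
  | nil => exact absurd rfl hy
  | cons h q => exact ⟨_, h⟩

/-- A tree `T` on `n` vertices with τ(T) ≥ 3 + ℓ(T) is non-ξ-primitive: some
3-edge-coloring of Kₙ makes every copy of `T` use all three colors. -/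
theorem tree_large_domination_non_xi_primitive (n : ℕ) (T : SimpleGraph (Fin n))
    (hT : T.IsTree) (hdom : 3 + maxLeaves T ≤ domNum T) :
    ∃ c : Fin n → Fin n → Fin 3, (∀ i j, c i j = c j i) ∧
      ∀ φ : Fin n → Fin n, Function.Injective φ →
        ∀ col : Fin 3, ∃ u v : Fin n, T.Adj u v ∧ c (φ u) (φ v) = col := by
  classical
  set ℓ := maxLeaves T with hℓ
  have hdomle : ∀ S : Finset (Fin n), IsDomSet T S → domNum T ≤ S.card := by
    intro S hS
    exact Nat.sInf_le ⟨S, rfl, hS⟩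
  have hconn : T.Connected := hT.isConnected
  have hn3 : 3 ≤ n := by
    have h1 : domNum T ≤ n := by
      have := hdomle Finset.univ (fun v => Or.inl (Finset.mem_univ v))
      simpa using this
    omega
  have hadj : ∀ x : Fin n, ∃ y, T.Adj x y :=
    fun x => exists_adj_of_connected hconn (by omega) x
  have hn4 : ℓ + 4 ≤ n := by
    have hS : IsDomSet T (Finset.univ.erase (⟨0, by omega⟩ : Fin n)) := by
      intro u
      by_cases hu : u = (⟨0, by omega⟩ : Fin n)
      · obtain ⟨y, hy⟩ := hadj u
        refine Or.inr ⟨y, Finset.mem_erase.mpr ⟨?_, Finset.mem_univ y⟩, hy.symm⟩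
        rw [← hu]; exact hy.ne'
      · exact Or.inl (Finset.mem_erase.mpr ⟨hu, Finset.mem_univ u⟩)
    have := hdomle _ hS
    rw [Finset.card_erase_of_mem (Finset.mem_univ _), Finset.card_univ, Fintype.card_fin] at this
    omega
  set v : Fin n := ⟨0, by omega⟩ with hv
  set Va : Finset (Fin n) := Finset.univ.filter (fun i => 1 ≤ i.val ∧ i.val ≤ ℓ + 1) with hVa
  have hvVa : v ∉ Va := by simp [hVa, hv]
  have hVacard : Va.card = ℓ + 1 := by
    have hbij : Va.card = (Finset.Icc 1 (ℓ + 1)).card := by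
      apply Finset.card_bij (fun (x : Fin n) _ => (x.val : ℕ))
      · intro x hx
        simp only [hVa, Finset.mem_filter, Finset.mem_univ, true_and] at hx
        simp only [Finset.mem_Icc]
        omega
      · intro x hx y hy h
        exact Fin.val_injective h
      · intro k hk
        simp only [Finset.mem_Icc] at hk
        refine ⟨⟨k, by omega⟩, ?_, rfl⟩
        simp only [hVa, Finset.mem_filter, Finset.mem_univ, true_and]
        exact ⟨hk.1, hk.2⟩
    rw [hbij, Nat.card_Icc]; omega
  have hleafbound : ∀ (w : Fin n) (L : Finset (Fin n)),
      (∀ u ∈ L, T.Adj w u ∧ IsLeaf T u) → L.card ≤ ℓ := by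
    intro w L hL
    apply le_csSup
    · refine ⟨n, ?_⟩
      rintro k ⟨w', L', hc', -⟩
      have := Finset.card_le_univ L'
      simp only [Finset.card_univ, Fintype.card_fin] at this
      omega
    · exact ⟨w, L, rfl, hL⟩
  refine ⟨fun i j => if i = v ∨ j = v then 0 else if i ∈ Va ∨ j ∈ Va then 1 else 2, ?_, ?_⟩
  · intro i j
    by_cases h1 : i = v <;> by_cases h2 : j = v <;> by_cases h3 : i ∈ Va <;>
      by_cases h4 : j ∈ Va <;> simp [h1, h2, h3, h4]
  · intro φ hφ col
    have hsurj : Function.Surjective φ := Finite.injective_iff_surjective.mp hφ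
    obtain ⟨w, hw⟩ := hsurj v
    fin_cases col
    · -- red : edges at the image vertex v
      obtain ⟨x, hx⟩ := hadj w
      exact ⟨w, x, hx, by simp [hw]⟩
    · -- blue : edges at Va avoiding v
      by_contra hcon
      push_neg at hcon
      set A := Finset.univ.filter (fun u => φ u ∈ Va) with hA
      have himg : A.image φ = Va := by
        ext y
        simp only [hA, Finset.mem_image, Finset.mem_filter, Finset.mem_univ, true_and]
        constructor
        · rintro ⟨u, hu, rfl⟩; exact hu
        · intro hy
          obtain ⟨u, rfl⟩ := hsurj y
          exact ⟨u, hy, rfl⟩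
      have hAcard : A.card = ℓ + 1 := by
        rw [← hVacard, ← himg, Finset.card_image_of_injective _ hφ]
      have hkey : ∀ u ∈ A, ∀ x, T.Adj u x → x = w := by
        intro u hu x hx
        by_contra hxw
        have h1 : φ u ∈ Va := by
          simpa only [hA, Finset.mem_filter, Finset.mem_univ, true_and] using hu
        have h2 : φ u ≠ v := fun h => hvVa (h ▸ h1)
        have h3 : φ x ≠ v := fun h => hxw (hφ (h.trans hw.symm))
        exact hcon u x hx (by simp [h1, h2, h3])
      have hleaf : ∀ u ∈ A, T.Adj w u ∧ IsLeaf T u := by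
        intro u hu
        obtain ⟨x, hx⟩ := hadj u
        have hxw := hkey u hu x hx
        subst hxw
        exact ⟨hx.symm, ⟨x, hx, fun y hy => hkey u hu y hy⟩⟩
      have := hleafbound w A hleaf
      omega
    · -- green : edges avoiding v and Va
      by_contra hcon
      push_neg at hcon
      set C := Finset.univ.filter (fun u => φ u = v ∨ φ u ∈ Va) with hC
      have hCdom : IsDomSet T C := by
        intro u
        by_cases hu : u ∈ C
        · exact Or.inl hu
        · obtain ⟨x, hx⟩ := hadj u
          by_cases hxC : x ∈ C
          · exact Or.inr ⟨x, hxC, hx.symm⟩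
          · exfalso
            simp only [hC, Finset.mem_filter, Finset.mem_univ, true_and] at hu hxC
            push_neg at hu hxC
            exact hcon u x hx (by simp [hu.1, hu.2, hxC.1, hxC.2])
      have h1 := hdomle C hCdom
      have h2 : C.card ≤ ℓ + 2 := by
        have hle : C.card ≤ (insert v Va).card := by
          apply Finset.card_le_card_of_injOn φ
          · intro u hu
            simp only [hC, Finset.mem_filter, Finset.mem_univ, true_and] at hu
            simp only [Finset.coe_insert, Set.mem_insert_iff, Finset.mem_coe, hC, Finset.mem_filter, Finset.mem_univ, true_and] at hu ⊢
            tauto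
          · exact hφ.injOn
        calc C.card ≤ (insert v Va).card := hle
          _ ≤ Va.card + 1 := Finset.card_insert_le _ _
          _ = ℓ + 2 := by omega
      omega
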